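/- Let A_1, A_2 be complex Hermitian n×n matrices and X a nonzero positive semidefinite Hermitian n×n matrix of rank r. Then there exist vectors x_1,...,x_r ∈ ℂ^n with X = Σ_{k=1}^r x_k x_k^H and, for every k, r·(x_k^H A_1 x_k) = tr(A_1 X) and r·(x_k^H A_2 x_k) = tr(A_2 X). -/

import Mathlib

open Matrix ComplexOrder Complex

namespace HZaux

noncomputable section

def sf {p : ℕ} (B : Matrix (Fin p) (Fin p) ℂ) (c d : Fin p → ℂ) : ℂ :=
  star c ⬝ᵥ B.mulVec d

lemma sf_smul_left {p : ℕ} (B : Matrix (Fin p) (Fin p) ℂ) (a : ℂ) (c d : Fin p → ℂ) :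
    sf B (a • c) d = (starRingEnd ℂ) a * sf B c d := by
  simp [sf, star_smul, smul_dotProduct, smul_eq_mul]

lemma sf_smul_right {p : ℕ} (B : Matrix (Fin p) (Fin p) ℂ) (a : ℂ) (c d : Fin p → ℂ) :
    sf B c (a • d) = a * sf B c d := by
  simp [sf, mulVec_smul, dotProduct_smul, smul_eq_mul]

lemma sf_add_left {p : ℕ} (B : Matrix (Fin p) (Fin p) ℂ) (c c' d : Fin p → ℂ) :
    sf B (c + c') d = sf B c d + sf B c' d := by
  simp [sf, star_add, add_dotProduct]

lemma sf_add_right {p : ℕ} (B : Matrix (Fin p) (Fin p) ℂ) (c d d' : Fin p → ℂ) :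
    sf B c (d + d') = sf B c d + sf B c d' := by
  simp [sf, mulVec_add, dotProduct_add]

lemma sf_expand {p : ℕ} (B : Matrix (Fin p) (Fin p) ℂ) (u v : Fin p → ℂ) (a b : ℂ) :
    sf B (a • u + b • v) (a • u + b • v)
      = (starRingEnd ℂ) a * a * sf B u u + (starRingEnd ℂ) a * b * sf B u v
        + (starRingEnd ℂ) b * a * sf B v u + (starRingEnd ℂ) b * b * sf B v v := by
  simp [sf_add_left, sf_add_right, sf_smul_left, sf_smul_right]
  ring

def nsq {p : ℕ} (c : Fin p → ℂ) : ℝ := ∑ i, Complex.normSq (c i)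

lemma nsq_nonneg {p : ℕ} (c : Fin p → ℂ) : 0 ≤ nsq c :=
  Finset.sum_nonneg fun _ _ => Complex.normSq_nonneg _

lemma nsq_smul {p : ℕ} (z : ℂ) (c : Fin p → ℂ) : nsq (z • c) = Complex.normSq z * nsq c := by
  simp [nsq, Complex.normSq_mul, Finset.mul_sum]

lemma nsq_eq_zero {p : ℕ} {c : Fin p → ℂ} (h : nsq c = 0) : c = 0 := by
  funext i
  have := (Finset.sum_eq_zero_iff_of_nonneg (fun i _ => Complex.normSq_nonneg (c i))).mp h i
    (Finset.mem_univ i)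
  simpa [Complex.normSq_eq_zero] using this

lemma ip_self_eq_nsq {p : ℕ} (c : Fin p → ℂ) : star c ⬝ᵥ c = (nsq c : ℂ) := by
  simp [dotProduct, nsq, Complex.normSq_eq_conj_mul_self]

lemma ip_conj {p : ℕ} (c d : Fin p → ℂ) :
    star d ⬝ᵥ c = (starRingEnd ℂ) (star c ⬝ᵥ d) := by
  simp [dotProduct, map_sum, mul_comm]

lemma sf_neg {p : ℕ} (B : Matrix (Fin p) (Fin p) ℂ) (c : Fin p → ℂ) :
    sf B (-c) (-c) = sf B c c := by
  simp [sf, mulVec_neg]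

lemma ip_expand {p : ℕ} (u v : Fin p → ℂ) (a b : ℂ) :
    star (a • u + b • v) ⬝ᵥ (a • u + b • v)
      = (starRingEnd ℂ) a * a * (star u ⬝ᵥ u) + (starRingEnd ℂ) a * b * (star u ⬝ᵥ v)
        + (starRingEnd ℂ) b * a * (star v ⬝ᵥ u) + (starRingEnd ℂ) b * b * (star v ⬝ᵥ v) := by
  have := sf_expand (1 : Matrix (Fin p) (Fin p) ℂ) u v a b
  simpa [sf, one_mulVec] using this

lemma exists_phase (a b D : ℂ) : ∃ γ : ℂ, γ * (starRingEnd ℂ) γ = 1 ∧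
    (((starRingEnd ℂ) γ * a + γ * b) / D).im = 0 := by
  set g : ℝ → ℝ := fun θ => ((Complex.exp (-(θ:ℂ)*I) * a + Complex.exp ((θ:ℂ)*I) * b) / D).im
    with hg
  have hcont : Continuous g := by
    apply Complex.continuous_im.comp
    fun_prop
  have hπ : g Real.pi = - g 0 := by
    have h1 : Complex.exp (-(Real.pi:ℂ)*I) = -1 := by
      rw [neg_mul, Complex.exp_neg, Complex.exp_pi_mul_I]
      norm_num
    have h2 : Complex.exp ((Real.pi:ℂ)*I) = -1 := Complex.exp_pi_mul_I
    simp only [hg, h1, h2]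
    have : (-1 * a + -1 * b) / D = -((1 * a + 1 * b) / D) := by ring
    rw [this, Complex.neg_im]
    norm_num
  have h0 : (0:ℝ) ∈ Set.uIcc (g 0) (g Real.pi) := by
    rw [hπ]
    rcases le_total (g 0) 0 with h | h
    · exact Set.mem_uIcc.mpr (Or.inl ⟨h, by linarith⟩)
    · exact Set.mem_uIcc.mpr (Or.inr ⟨by linarith, h⟩)
  obtain ⟨θ, -, hθ⟩ := intermediate_value_uIcc (hcont.continuousOn (s := Set.uIcc 0 Real.pi)) h0
  refine ⟨Complex.exp ((θ:ℂ)*I), ?_, ?_⟩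
  · rw [← Complex.exp_conj]
    rw [← Complex.exp_add]
    simp [Complex.conj_I]
  · have hconj : (starRingEnd ℂ) (Complex.exp ((θ:ℂ)*I)) = Complex.exp (-(θ:ℂ)*I) := by
      rw [← Complex.exp_conj]
      congr 1
      simp [Complex.conj_I]
    rw [hconj]
    exact hθ

/-- Toeplitz–Hausdorff segment lemma -/
lemma seg {p : ℕ} (B : Matrix (Fin p) (Fin p) ℂ) (u v : Fin p → ℂ)
    (hu : star u ⬝ᵥ u = 1) (hv : star v ⬝ᵥ v = 1) (t : ℝ) (ht0 : 0 ≤ t) (ht1 : t ≤ 1) :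
    ∃ w, star w ⬝ᵥ w = 1 ∧ sf B w w = (1 - (t:ℂ)) * sf B u u + (t:ℂ) * sf B v v := by
  set α := sf B u u with hα
  set β := sf B v v with hβ
  by_cases hab : α = β
  · exact ⟨u, hu, by rw [← hab]; ring⟩
  set D := α - β with hD
  have hD0 : D ≠ 0 := sub_ne_zero.mpr hab
  obtain ⟨γ, hγ1, hγ2⟩ := exists_phase (sf B u v - β * (star u ⬝ᵥ v))
    (sf B v u - β * (star v ⬝ᵥ u)) D
  set a := sf B u v - β * (star u ⬝ᵥ v) with ha
  set b := sf B v u - β * (star v ⬝ᵥ u) with hb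
  set u' : Fin p → ℂ := γ • u with hu'def
  have hγγ : (starRingEnd ℂ) γ * γ = 1 := by rw [mul_comm]; exact hγ1
  have hu'1 : star u' ⬝ᵥ u' = 1 := by
    rw [hu'def, star_smul, smul_dotProduct, dotProduct_smul, hu]
    simpa using hγγ
  have hαu' : sf B u' u' = α := by
    rw [hu'def, sf_smul_left, sf_smul_right, ← mul_assoc, hγγ, one_mul, hα]
  -- the rotated cross terms
  set ρ : ℝ := (((starRingEnd ℂ) γ * a + γ * b) / D).re with hρ
  have hcγ : (starRingEnd ℂ) γ * a + γ * b = D * (ρ:ℂ) := by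
    have h1 : ((starRingEnd ℂ) γ * a + γ * b) / D = (ρ:ℂ) := by
      apply Complex.ext
      · simp [hρ]
      · simp [hγ2]
    calc (starRingEnd ℂ) γ * a + γ * b = (((starRingEnd ℂ) γ * a + γ * b) / D) * D := by
          field_simp
      _ = D * (ρ:ℂ) := by rw [h1]; ring
  set er : ℝ := (star u' ⬝ᵥ v).re with her
  have hη : star u' ⬝ᵥ v + star v ⬝ᵥ u' = ((2*er : ℝ) : ℂ) := by
    rw [ip_conj u' v, her]
    push_cast
    rw [Complex.add_conj]
    push_cast
    ring
  have hP : sf B u' v + sf B v u' = D * (ρ:ℂ) + β * ((2*er : ℝ):ℂ) := by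
    have e1 : sf B u' v = (starRingEnd ℂ) γ * sf B u v := by rw [hu'def, sf_smul_left]
    have e2 : sf B v u' = γ * sf B v u := by rw [hu'def, sf_smul_right]
    have e3 : star u' ⬝ᵥ v = (starRingEnd ℂ) γ * (star u ⬝ᵥ v) := by
      rw [hu'def, star_smul, smul_dotProduct]; simp
    have e4 : star v ⬝ᵥ u' = γ * (star v ⬝ᵥ u) := by
      rw [hu'def, dotProduct_smul]; simp
    have := hcγ
    rw [ha, hb] at this
    have h5 : (starRingEnd ℂ) γ * sf B u v + γ * sf B v u
        = D * (ρ:ℂ) + β * ((starRingEnd ℂ) γ * (star u ⬝ᵥ v) + γ * (star v ⬝ᵥ u)) := by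
      linear_combination this
    rw [e1, e2, h5, ← e3, ← e4, hη]
  -- the path
  set w : ℝ → (Fin p → ℂ) := fun s => (((1-s : ℝ)):ℂ) • u' + ((s : ℝ):ℂ) • v with hw
  set Np : ℝ → ℝ := fun s => (1-s)^2 + s^2 + s*(1-s)*(2*er) with hNp
  set Fp : ℝ → ℝ := fun s => (1-s)^2 + s*(1-s)*ρ with hFp
  have hwN : ∀ s : ℝ, star (w s) ⬝ᵥ (w s) = ((Np s : ℝ) : ℂ) := by
    intro s
    rw [hw]
    simp only
    rw [ip_expand, hu'1, hv]
    rw [Complex.conj_ofReal, Complex.conj_ofReal]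
    have : ((1-s:ℝ):ℂ) * ((s:ℝ):ℂ) * (star u' ⬝ᵥ v) + ((s:ℝ):ℂ) * ((1-s:ℝ):ℂ) * (star v ⬝ᵥ u')
        = ((s:ℝ):ℂ) * ((1-s:ℝ):ℂ) * (star u' ⬝ᵥ v + star v ⬝ᵥ u') := by ring
    rw [show ((1-s:ℝ):ℂ) * ((1-s:ℝ):ℂ) * 1 + ((1-s:ℝ):ℂ) * ((s:ℝ):ℂ) * (star u' ⬝ᵥ v)
        + ((s:ℝ):ℂ) * ((1-s:ℝ):ℂ) * (star v ⬝ᵥ u') + ((s:ℝ):ℂ) * ((s:ℝ):ℂ) * 1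
        = ((1-s:ℝ):ℂ) * ((1-s:ℝ):ℂ) + ((s:ℝ):ℂ) * ((s:ℝ):ℂ)
          + ((s:ℝ):ℂ) * ((1-s:ℝ):ℂ) * (star u' ⬝ᵥ v + star v ⬝ᵥ u') from by ring]
    rw [hη, hNp]
    push_cast
    ring
  have hNval : ∀ s : ℝ, nsq (w s) = Np s := by
    intro s
    have := (ip_self_eq_nsq (w s)).symm.trans (hwN s)
    exact_mod_cast this
  have hkey : ∀ s : ℝ, sf B (w s) (w s) = D * ((Fp s : ℝ):ℂ) + β * ((Np s : ℝ):ℂ) := by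
    intro s
    rw [hw]
    simp only
    rw [sf_expand, hαu', ← hβ]
    rw [Complex.conj_ofReal, Complex.conj_ofReal]
    have hmid : ((1-s:ℝ):ℂ) * ((s:ℝ):ℂ) * (sf B u' v) + ((s:ℝ):ℂ) * ((1-s:ℝ):ℂ) * (sf B v u')
        = ((s:ℝ):ℂ) * ((1-s:ℝ):ℂ) * (sf B u' v + sf B v u') := by ring
    rw [show ((1-s:ℝ):ℂ) * ((1-s:ℝ):ℂ) * α + ((1-s:ℝ):ℂ) * ((s:ℝ):ℂ) * (sf B u' v)
        + ((s:ℝ):ℂ) * ((1-s:ℝ):ℂ) * (sf B v u') + ((s:ℝ):ℂ) * ((s:ℝ):ℂ) * β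
        = ((1-s:ℝ):ℂ) * ((1-s:ℝ):ℂ) * α + ((s:ℝ):ℂ) * ((s:ℝ):ℂ) * β
          + ((s:ℝ):ℂ) * ((1-s:ℝ):ℂ) * (sf B u' v + sf B v u') from by ring]
    rw [hP, hD, hFp, hNp]
    push_cast
    ring
  -- positivity of N on [0,1]
  have hnsqu' : nsq u' = 1 := by
    have := (ip_self_eq_nsq u').symm.trans hu'1
    exact_mod_cast this
  have hnsqv : nsq v = 1 := by
    have := (ip_self_eq_nsq v).symm.trans hv
    exact_mod_cast this
  have hNpos : ∀ s : ℝ, 0 ≤ s → s ≤ 1 → 0 < nsq (w s) := by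
    intro s hs0 hs1
    rcases (nsq_nonneg (w s)).lt_or_eq with h | h
    · exact h
    exfalso
    have hws : w s = 0 := nsq_eq_zero h.symm
    have heq : (((1-s : ℝ)):ℂ) • u' = -(((s : ℝ):ℂ) • v) := by
      have : (((1-s : ℝ)):ℂ) • u' + ((s : ℝ):ℂ) • v = 0 := hws
      linear_combination (norm := module) this
    have hnorm : (1-s)*(1-s) = s*s := by
      have h1 := congrArg nsq heq
      rw [nsq_smul] at h1
      have h2 : nsq (-(((s : ℝ):ℂ) • v)) = Complex.normSq ((s:ℝ):ℂ) * nsq v := by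
        rw [show -(((s : ℝ):ℂ) • v) = ((-s:ℝ):ℂ) • v from by push_cast; module]
        rw [nsq_smul]
        simp [Complex.normSq_ofReal]
      rw [h2, hnsqu', hnsqv] at h1
      rw [Complex.normSq_ofReal, Complex.normSq_ofReal, mul_one, mul_one] at h1
      exact h1
    have hs12 : s = 1/2 := by nlinarith
    have hu'v : u' = -v := by
      rw [hs12] at heq
      funext i
      show u' i = -(v i)
      have := congrFun heq i
      simp only [Pi.smul_apply, Pi.neg_apply, smul_eq_mul] at this
      push_cast at this
      linear_combination 2 * this
    have : α = β := by
      rw [← hαu', hu'v, sf_neg, hβ]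
    exact hab this
  -- the quotient function and IVT
  set f : ℝ → ℝ := fun s => Fp s / Np s with hf
  have hNp0 : ∀ s ∈ Set.Icc (0:ℝ) 1, Np s ≠ 0 := by
    intro s hs
    rw [← hNval s]
    exact ne_of_gt (hNpos s hs.1 hs.2)
  have hfc : ContinuousOn f (Set.Icc (0:ℝ) 1) := by
    apply ContinuousOn.div
    · fun_prop
    · fun_prop
    · exact hNp0
  have hf0 : f 0 = 1 := by
    have hN0 : Np 0 = 1 := by
      rw [← hNval 0]
      have : w 0 = u' := by
        rw [hw]; simp
      rw [this, hnsqu']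
    simp [hf, hFp, hN0]
  have hf1 : f 1 = 0 := by
    simp [hf, hFp]
  have hmem : (1 - t) ∈ Set.Icc (f 1) (f 0) := by
    rw [hf0, hf1]
    constructor <;> linarith
  obtain ⟨s₀, hs₀, hfs₀⟩ := intermediate_value_Icc' (by norm_num : (0:ℝ) ≤ 1) hfc hmem
  set N₀ : ℝ := Np s₀ with hN₀
  have hN₀pos : 0 < N₀ := by
    rw [hN₀, ← hNval s₀]
    exact hNpos s₀ hs₀.1 hs₀.2
  set z : ℂ := (((Real.sqrt N₀)⁻¹ : ℝ) : ℂ) with hz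
  refine ⟨z • w s₀, ?_, ?_⟩
  · rw [ip_self_eq_nsq, nsq_smul, hNval s₀, hz]
    rw [Complex.normSq_ofReal]
    rw [← Real.sqrt_inv]
    rw [Real.mul_self_sqrt (by positivity)]
    rw [← hN₀]
    field_simp
    norm_num
  · rw [sf_smul_left, sf_smul_right, hkey s₀, hz, Complex.conj_ofReal]
    have hzz : (((Real.sqrt N₀)⁻¹ : ℝ) : ℂ) * (((Real.sqrt N₀)⁻¹ : ℝ) : ℂ) = ((N₀⁻¹ : ℝ) : ℂ) := by
      push_cast
      rw [← mul_inv]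
      congr 1
      exact_mod_cast Real.mul_self_sqrt hN₀pos.le
    have hFval : Fp s₀ = (1 - t) * N₀ := by
      have : Fp s₀ / N₀ = 1 - t := hfs₀
      field_simp at this
      linarith [this]
    rw [← mul_assoc, hzz, ← hN₀, hFval]
    rw [hD]
    push_cast
    have hN₀ne : (N₀ : ℂ) ≠ 0 := by
      exact_mod_cast ne_of_gt hN₀pos
    field_simp
    ring

end
end HZaux

namespace Part2

open HZaux

lemma single_unit {p : ℕ} (i : Fin p) : star (Pi.single i 1 : Fin p → ℂ) ⬝ᵥ Pi.single i 1 = 1 := by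
  simp [dotProduct, Pi.single_apply, apply_ite]

lemma sf_single {p : ℕ} (B : Matrix (Fin p) (Fin p) ℂ) (i j : Fin p) :
    sf B (Pi.single i 1) (Pi.single j 1) = B i j := by
  simp [sf, dotProduct, mulVec, Pi.single_apply, apply_ite]

lemma avg {p : ℕ} (B : Matrix (Fin p) (Fin p) ℂ) :
    ∀ (m : ℕ) (u : Fin (m+1) → (Fin p → ℂ)), (∀ i, star (u i) ⬝ᵥ u i = 1) →
    ∃ c, star c ⬝ᵥ c = 1 ∧ ((m:ℂ)+1) * sf B c c = ∑ i, sf B (u i) (u i) := by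
  intro m
  induction m with
  | zero =>
    intro u hu
    exact ⟨u 0, hu 0, by simp⟩
  | succ m ih =>
    intro u hu
    obtain ⟨c', hc'1, hc'2⟩ := ih (fun i => u i.castSucc) (fun i => hu i.castSucc)
    have ht0 : (0:ℝ) ≤ 1/(m+2) := by positivity
    have ht1 : (1/(m+2):ℝ) ≤ 1 := by
      rw [div_le_one (by positivity)]
      linarith [Nat.cast_nonneg (α := ℝ) m]
    obtain ⟨w, hw1, hw2⟩ := seg B c' (u (Fin.last _)) hc'1 (hu _) (1/(m+2)) ht0 ht1
    refine ⟨w, hw1, ?_⟩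
    rw [Fin.sum_univ_castSucc, ← hc'2, hw2]
    have hcast : ((1/(m+2):ℝ) : ℂ) = 1/((m:ℂ)+2) := by push_cast; ring
    rw [hcast]
    have h2 : ((m:ℂ)+2) ≠ 0 := by
      intro h
      have : (m:ℂ) = -2 := by linear_combination h
      have := congrArg Complex.re this
      simp at this
      linarith [Nat.cast_nonneg (α := ℝ) m]
    push_cast
    field_simp
    ring

lemma complete {m : ℕ} (b : OrthonormalBasis (Fin m) ℂ (EuclideanSpace ℂ (Fin m))) (k l : Fin m) :
    ∑ j, (b j) k * (starRingEnd ℂ) ((b j) l) = if k = l then 1 else 0 := by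
  have h := b.sum_inner_mul_inner (EuclideanSpace.single k (1:ℂ)) (EuclideanSpace.single l (1:ℂ))
  simp only [EuclideanSpace.inner_single_left, EuclideanSpace.inner_single_right, _root_.map_one,
    one_mul, mul_one] at h
  rw [h]
  by_cases hkl : k = l
  · simp [hkl, EuclideanSpace.single_apply]
  · have hlk : l ≠ k := fun hh => hkl hh.symm
    simp [hkl, EuclideanSpace.single_apply, hlk]

lemma complete' {m : ℕ} (b : OrthonormalBasis (Fin m) ℂ (EuclideanSpace ℂ (Fin m))) (k l : Fin m) :
    ∑ j, (starRingEnd ℂ) ((b j) k) * (b j) l = if k = l then 1 else 0 := by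
  have := congrArg (starRingEnd ℂ) (complete b k l)
  rw [map_sum] at this
  simp only [MonoidWithZeroHom.map_ite_one_zero] at this
  rw [← this]
  apply Finset.sum_congr rfl
  intro j _
  rw [_root_.map_mul, starRingEnd_self_apply]

lemma exists_onb {m : ℕ} (c : Fin (m+1) → ℂ) (hc : star c ⬝ᵥ c = 1) :
    ∃ b : OrthonormalBasis (Fin (m+1)) ℂ (EuclideanSpace ℂ (Fin (m+1))),
      (b 0 : EuclideanSpace ℂ (Fin (m+1))) = c := by
  let c' : EuclideanSpace ℂ (Fin (m+1)) := WithLp.toLp 2 c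
  have hinner : (inner (𝕜 := ℂ) c' c') = (1:ℂ) := by
    rw [show (inner (𝕜 := ℂ) c' c') = star c ⬝ᵥ c from by
      simp [c', PiLp.inner_apply, RCLike.inner_apply, dotProduct, -inner_self_eq_norm_sq_to_K, mul_comm]]
    exact hc
  have hnorm : ‖c'‖ = 1 := by
    have h := inner_self_eq_norm_mul_norm (𝕜 := ℂ) c'
    rw [hinner] at h
    norm_num at h
    nlinarith [norm_nonneg c']
  have hortho : Orthonormal ℂ (({0} : Set (Fin (m+1))).restrict
      (fun _ : Fin (m+1) => c')) := by
    constructor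
    · intro i; exact hnorm
    · intro i j hij
      exfalso
      apply hij
      ext
      have hi := i.2; have hj := j.2
      simp only [Set.mem_singleton_iff] at hi hj
      rw [hi, hj]
  obtain ⟨b, hb⟩ := hortho.exists_orthonormalBasis_extension_of_card_eq (by simp)
  exact ⟨b, by rw [hb 0 rfl]⟩

end Part2

namespace Part3
open HZaux Part2

lemma sf_zero_left {p : ℕ} (B : Matrix (Fin p) (Fin p) ℂ) (d : Fin p → ℂ) :
    sf B 0 d = 0 := by
  simp [sf]

lemma sf_zero_right {p : ℕ} (B : Matrix (Fin p) (Fin p) ℂ) (c : Fin p → ℂ) :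
    sf B c 0 = 0 := by
  simp [sf, mulVec_zero]

lemma sf_sum_left {p q : ℕ} (B : Matrix (Fin p) (Fin p) ℂ) (f : Fin q → Fin p → ℂ)
    (d : Fin p → ℂ) : sf B (∑ k, f k) d = ∑ k, sf B (f k) d := by
  classical
  induction (Finset.univ : Finset (Fin q)) using Finset.induction with
  | empty => simp [sf_zero_left]
  | insert a s hx ih => simp [Finset.sum_insert hx, sf_add_left, ih]

lemma sf_sum_right {p q : ℕ} (B : Matrix (Fin p) (Fin p) ℂ) (f : Fin q → Fin p → ℂ)
    (c : Fin p → ℂ) : sf B c (∑ k, f k) = ∑ k, sf B c (f k) := by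
  classical
  induction (Finset.univ : Finset (Fin q)) using Finset.induction with
  | empty => simp [sf_zero_right]
  | insert a s hx ih => simp [Finset.sum_insert hx, sf_add_right, ih]

lemma sf_sum {p q : ℕ} (A : Matrix (Fin p) (Fin p) ℂ) (y : Fin q → Fin p → ℂ)
    (c d : Fin q → ℂ) :
    sf A (∑ k, c k • y k) (∑ l, d l • y l)
      = ∑ k, ∑ l, (starRingEnd ℂ) (c k) * d l * sf A (y k) (y l) := by
  rw [sf_sum_left]
  apply Finset.sum_congr rfl
  intro k _
  rw [sf_sum_right]
  apply Finset.sum_congr rfl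
  intro l _
  rw [sf_smul_left, sf_smul_right]
  ring

lemma sf_apply_expand {p : ℕ} (B : Matrix (Fin p) (Fin p) ℂ) (c d : Fin p → ℂ) :
    sf B c d = ∑ k, ∑ l, (starRingEnd ℂ) (c k) * d l * B k l := by
  have hc : c = ∑ k, c k • (Pi.single k (1:ℂ) : Fin p → ℂ) := by
    funext i
    simp [Finset.sum_apply, Pi.single_apply]
  have hd : d = ∑ l, d l • (Pi.single l (1:ℂ) : Fin p → ℂ) := by
    funext i
    simp [Finset.sum_apply, Pi.single_apply]
  conv_lhs => rw [hc, hd]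
  rw [sf_sum]
  simp [sf_single]

end Part3

namespace Part4
open HZaux Part2 Part3

lemma main_lemma {nn : ℕ} (A : Matrix (Fin nn) (Fin nn) ℂ) :
    ∀ (r : ℕ) (y : Fin r → (Fin nn → ℂ)) (μ : ℂ),
      (∑ k, sf A (y k) (y k)) = (r:ℂ) * μ →
      ∃ x : Fin r → (Fin nn → ℂ),
        (∑ k, vecMulVec (x k) (star (x k))) = (∑ k, vecMulVec (y k) (star (y k))) ∧
        ∀ k, sf A (x k) (x k) = μ := by
  intro r
  induction r with
  | zero => intro y μ _; exact ⟨y, rfl, fun k => k.elim0⟩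
  | succ r ih =>
    intro y μ hsum
    set B : Matrix (Fin (r+1)) (Fin (r+1)) ℂ := Matrix.of fun j k => sf A (y j) (y k) with hB
    obtain ⟨c, hc1, hc2⟩ := avg B r (fun i => Pi.single i 1) (fun i => single_unit i)
    have hBdiag : ∀ i : Fin (r+1), sf B (Pi.single i 1) (Pi.single i 1) = sf A (y i) (y i) :=
      fun i => by rw [sf_single]; rfl
    have hr1 : ((r:ℂ)+1) ≠ 0 := by
      have := Nat.cast_add_one_ne_zero (R := ℂ) r
      exact_mod_cast this
    have hμc : sf B c c = μ := by
      have h1 : ((r:ℂ)+1) * sf B c c = ((r:ℂ)+1) * μ := by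
        rw [hc2, Finset.sum_congr rfl (fun i _ => hBdiag i), hsum]
        push_cast
        ring
      exact mul_left_cancel₀ hr1 h1
    obtain ⟨b, hb0⟩ := exists_onb c hc1
    set z : Fin (r+1) → (Fin nn → ℂ) := fun j => ∑ k, (b j) k • y k with hz
    have hzq : ∀ j, sf A (z j) (z j) = sf B (b j) (b j) := by
      intro j
      rw [sf_apply_expand B]
      have := sf_sum A y (b j) (b j)
      rw [hz]
      simp only []
      rw [this]
      apply Finset.sum_congr rfl; intro k _
      apply Finset.sum_congr rfl; intro l _
      rw [hB]
      rfl
    have hz0 : sf A (z 0) (z 0) = μ := by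
      rw [hzq 0, hb0, hμc]
    have htot : ∑ j, sf B (b j) (b j) = ∑ k : Fin (r+1), B k k := by
      rw [Finset.sum_congr rfl (fun j (_ : j ∈ Finset.univ) => sf_apply_expand B (b j) (b j))]
      rw [Finset.sum_comm]
      apply Finset.sum_congr rfl; intro k _
      rw [Finset.sum_comm]
      have : ∀ l : Fin (r+1), (∑ j, (starRingEnd ℂ) ((b j) k) * (b j) l * B k l)
          = (if k = l then (1:ℂ) else 0) * B k l := by
        intro l
        rw [← Finset.sum_mul, complete' b k l]
      rw [Finset.sum_congr rfl (fun l _ => this l)]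
      simp
    have htotA : ∑ j, sf A (z j) (z j) = ((r:ℂ)+1) * μ := by
      rw [Finset.sum_congr rfl (fun j (_ : j ∈ Finset.univ) => hzq j), htot]
      have : ∑ k : Fin (r+1), B k k = ∑ k, sf A (y k) (y k) :=
        Finset.sum_congr rfl (fun k _ => rfl)
      rw [this, hsum]
      push_cast
      ring
    have hvmv : (∑ j, vecMulVec (z j) (star (z j))) = ∑ k, vecMulVec (y k) (star (y k)) := by
      funext pp qq
      rw [Matrix.sum_apply, Matrix.sum_apply]
      have hzap : ∀ j, z j pp = ∑ k, (b j) k * y k pp := by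
        intro j
        rw [hz]
        simp [Finset.sum_apply]
      have hzap2 : ∀ j, (star (z j)) qq = ∑ l, (starRingEnd ℂ) ((b j) l * y l qq) := by
        intro j
        rw [Pi.star_apply, Complex.star_def, ← map_sum]
        congr 1
        rw [hz]
        simp [Finset.sum_apply]
      have step : ∀ j, vecMulVec (z j) (star (z j)) pp qq
          = ∑ k, ∑ l, ((b j) k * (starRingEnd ℂ) ((b j) l)) * (y k pp * (starRingEnd ℂ) (y l qq)) := by
        intro j
        rw [vecMulVec_apply, hzap j, hzap2 j, Finset.sum_mul_sum]
        apply Finset.sum_congr rfl; intro k _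
        apply Finset.sum_congr rfl; intro l _
        rw [_root_.map_mul]
        ring
      have inner_step : ∀ k, (∑ l, ∑ j, ((b j) k * (starRingEnd ℂ) ((b j) l))
            * (y k pp * (starRingEnd ℂ) (y l qq)))
          = vecMulVec (y k) (star (y k)) pp qq := by
        intro k
        have hl : ∀ l, (∑ j, ((b j) k * (starRingEnd ℂ) ((b j) l))
              * (y k pp * (starRingEnd ℂ) (y l qq)))
            = (if k = l then (1:ℂ) else 0) * (y k pp * (starRingEnd ℂ) (y l qq)) := by
          intro l
          rw [← Finset.sum_mul, complete b k l]
        rw [Finset.sum_congr rfl (fun l _ => hl l)]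
        simp [vecMulVec_apply]
      rw [Finset.sum_congr rfl (fun j (_ : j ∈ Finset.univ) => step j)]
      rw [Finset.sum_comm]
      refine Finset.sum_congr rfl fun k _ => ?_
      rw [Finset.sum_comm]
      exact inner_step k
    -- apply induction hypothesis to the tail
    have htail : (∑ k : Fin r, sf A (z k.succ) (z k.succ)) = (r:ℂ) * μ := by
      have h1 := htotA
      rw [Fin.sum_univ_succ, hz0] at h1
      linear_combination h1
    obtain ⟨x', hx'1, hx'2⟩ := ih (fun k => z k.succ) μ htail
    refine ⟨Fin.cons (z 0) x', ?_, ?_⟩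
    · rw [Fin.sum_univ_succ]
      simp only [Fin.cons_zero, Fin.cons_succ]
      rw [hx'1, ← hvmv, Fin.sum_univ_succ]
    · intro k
      refine Fin.cases ?_ ?_ k
      · simpa [Fin.cons_zero] using hz0
      · intro i
        simpa [Fin.cons_succ] using hx'2 i

end Part4

namespace Part5
open HZaux Part2 Part3 Part4

lemma trace_mul_vecMulVec {nn : ℕ} (A : Matrix (Fin nn) (Fin nn) ℂ) (u : Fin nn → ℂ) :
    (A * vecMulVec u (star u)).trace = sf A u u := by
  simp only [Matrix.trace, Matrix.diag_apply, Matrix.mul_apply, vecMulVec_apply, sf,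
    dotProduct, mulVec, Pi.star_apply, Complex.star_def, Finset.mul_sum]
  apply Finset.sum_congr rfl; intro j _
  apply Finset.sum_congr rfl; intro l _
  ring

lemma herm_real {nn : ℕ} {A : Matrix (Fin nn) (Fin nn) ℂ} (hA : A.IsHermitian)
    (u : Fin nn → ℂ) : (starRingEnd ℂ) (sf A u u) = sf A u u := by
  rw [sf_apply_expand, map_sum]
  rw [show (∑ k, (starRingEnd ℂ) (∑ l, (starRingEnd ℂ) (u k) * u l * A k l))
      = ∑ k, ∑ l, u k * (starRingEnd ℂ) (u l) * (starRingEnd ℂ) (A k l) from by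
    apply Finset.sum_congr rfl; intro k _
    rw [map_sum]
    apply Finset.sum_congr rfl; intro l _
    rw [_root_.map_mul, _root_.map_mul, starRingEnd_self_apply]]
  rw [Finset.sum_comm]
  apply Finset.sum_congr rfl; intro k _
  apply Finset.sum_congr rfl; intro l _
  have hAa : (starRingEnd ℂ) (A l k) = A k l := hA.apply k l
  rw [hAa]
  ring

lemma trace_real {nn : ℕ} {A X : Matrix (Fin nn) (Fin nn) ℂ} (hA : A.IsHermitian)
    (hX : X.IsHermitian) : (starRingEnd ℂ) ((A * X).trace) = (A * X).trace := by
  have h1 : star ((A * X).trace) = ((A * X)ᴴ).trace := (Matrix.trace_conjTranspose (A * X)).symm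
  rw [Complex.star_def] at h1
  rw [h1, Matrix.conjTranspose_mul, hA.eq, hX.eq, Matrix.trace_mul_comm]

lemma real_split (a b : ℂ) (ha : (starRingEnd ℂ) a = a) (hb : (starRingEnd ℂ) b = b)
    (h : a + Complex.I * b = 0) : a = 0 ∧ b = 0 := by
  have h2 := congrArg (starRingEnd ℂ) h
  rw [map_add, _root_.map_mul, Complex.conj_I, ha, hb, map_zero] at h2
  constructor
  · linear_combination (h + h2) / 2
  · linear_combination (-Complex.I/2) * h + (Complex.I/2) * h2 + b * Complex.I_sq

end Part5

open HZaux Part2 Part3 Part4 Part5 in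
theorem stmt_1 (n r : ℕ) (A₁ A₂ X : Matrix (Fin n) (Fin n) ℂ)
    (hA₁ : A₁.IsHermitian) (hA₂ : A₂.IsHermitian)
    (hX : X.PosSemidef) (hX0 : X ≠ 0) (hr : X.rank = r) :
    ∃ x : Fin r → (Fin n → ℂ),
      X = ∑ k, vecMulVec (x k) (star (x k)) ∧
      ∀ k, (r : ℂ) * (star (x k) ⬝ᵥ A₁.mulVec (x k)) = (A₁ * X).trace ∧
           (r : ℂ) * (star (x k) ⬝ᵥ A₂.mulVec (x k)) = (A₂ * X).trace := by
  classical
  have hH : X.IsHermitian := hX.1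
  set lam := hH.eigenvalues with hlam
  set V : Matrix (Fin n) (Fin n) ℂ := (hH.eigenvectorUnitary : Matrix (Fin n) (Fin n) ℂ) with hV
  have hcard : Fintype.card {i // lam i ≠ 0} = r := by
    rw [← hH.rank_eq_card_non_zero_eigs, hr]
  have e : Fin r ≃ {i // lam i ≠ 0} := (Fintype.equivOfCardEq (by simp [hcard]))
  set y : Fin r → (Fin n → ℂ) :=
    fun k => fun j => ((Real.sqrt (lam (e k).1) : ℝ) : ℂ) * V j (e k).1 with hy
  have hXpq : ∀ p q, X p q = ∑ i, V p i * ((lam i : ℝ):ℂ) * (starRingEnd ℂ) (V q i) := by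
    intro p q
    conv_lhs => rw [hH.spectral_theorem, Unitary.conjStarAlgAut_apply]
    rw [Matrix.mul_apply]
    apply Finset.sum_congr rfl; intro i _
    rw [Matrix.mul_diagonal]
    rw [Matrix.star_apply, Complex.star_def]
    simp only [Function.comp_apply]
    rw [hlam, hV]
    rfl
  have hXdec : X = ∑ k, vecMulVec (y k) (star (y k)) := by
    funext p q
    rw [Matrix.sum_apply, hXpq p q]
    have hterm : ∀ k : Fin r, (vecMulVec (y k) (star (y k))) p q
        = V p (e k).1 * ((lam (e k).1 : ℝ):ℂ) * (starRingEnd ℂ) (V q (e k).1) := by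
      intro k
      rw [vecMulVec_apply, hy]
      simp only [Pi.star_apply, Complex.star_def, _root_.map_mul, Complex.conj_ofReal]
      have hs : ((Real.sqrt (lam (e k).1) : ℝ):ℂ) * ((Real.sqrt (lam (e k).1) : ℝ):ℂ)
          = ((lam (e k).1 : ℝ):ℂ) := by
        rw [← Complex.ofReal_mul]
        congr 1
        exact Real.mul_self_sqrt (hX.eigenvalues_nonneg _)
      calc ((Real.sqrt (lam (e k).1) : ℝ):ℂ) * V p (e k).1
            * (((Real.sqrt (lam (e k).1) : ℝ):ℂ) * (starRingEnd ℂ) (V q (e k).1))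
          = (((Real.sqrt (lam (e k).1) : ℝ):ℂ) * ((Real.sqrt (lam (e k).1) : ℝ):ℂ))
            * (V p (e k).1 * (starRingEnd ℂ) (V q (e k).1)) := by ring
        _ = _ := by rw [hs]; ring
    rw [Finset.sum_congr rfl (fun k (_ : k ∈ Finset.univ) => hterm k)]
    rw [show (∑ k : Fin r, V p (e k).1 * ((lam (e k).1 : ℝ):ℂ) * (starRingEnd ℂ) (V q (e k).1))
        = ∑ s : {i // lam i ≠ 0}, V p s.1 * ((lam s.1 : ℝ):ℂ) * (starRingEnd ℂ) (V q s.1) from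
      Equiv.sum_comp e (fun s : {i // lam i ≠ 0} =>
        V p s.1 * ((lam s.1 : ℝ):ℂ) * (starRingEnd ℂ) (V q s.1))]
    rw [← Finset.sum_subtype (Finset.univ.filter (fun i => lam i ≠ 0))
      (by simp) (fun i => V p i * ((lam i : ℝ):ℂ) * (starRingEnd ℂ) (V q i))]
    rw [Finset.sum_filter_of_ne]
    intro i _ hne hlam0
    apply hne
    rw [hlam0]
    push_cast
    ring
  have hr0 : r ≠ 0 := by
    intro h0
    apply hX0
    rw [hXdec]
    have : (Finset.univ : Finset (Fin r)) = ∅ := by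
      apply Finset.univ_eq_empty_iff.mpr
      rw [h0]
      infer_instance
    rw [this, Finset.sum_empty]
  have hrC : ((r:ℕ):ℂ) ≠ 0 := Nat.cast_ne_zero.mpr hr0
  set Ac : Matrix (Fin n) (Fin n) ℂ := A₁ + Complex.I • A₂ with hAc
  have htr : (Ac * X).trace = ∑ k, sf Ac (y k) (y k) := by
    conv_lhs => rw [hXdec]
    rw [Matrix.mul_sum, Matrix.trace_sum]
    exact Finset.sum_congr rfl fun k _ => trace_mul_vecMulVec Ac (y k)
  set μ : ℂ := (Ac * X).trace / r with hμdef
  have hμ : (∑ k, sf Ac (y k) (y k)) = (r:ℂ) * μ := by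
    rw [← htr, hμdef]
    field_simp
  obtain ⟨x, hx1, hx2⟩ := main_lemma Ac r y μ hμ
  refine ⟨x, ?_, ?_⟩
  · rw [hXdec, ← hx1]
  · intro k
    have hsplit : sf Ac (x k) (x k)
        = sf A₁ (x k) (x k) + Complex.I * sf A₂ (x k) (x k) := by
      rw [hAc]
      simp [sf, Matrix.add_mulVec, Matrix.smul_mulVec, dotProduct_add, dotProduct_smul,
        smul_eq_mul]
    have htrsplit : (Ac * X).trace = (A₁ * X).trace + Complex.I * (A₂ * X).trace := by
      rw [hAc, Matrix.add_mul, Matrix.smul_mul, Matrix.trace_add, Matrix.trace_smul,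
        smul_eq_mul]
    have hq : (r:ℂ) * sf Ac (x k) (x k) = (Ac * X).trace := by
      rw [hx2 k, hμdef]
      field_simp
    rw [hsplit, htrsplit] at hq
    have key : ((r:ℂ) * sf A₁ (x k) (x k) - (A₁*X).trace)
        + Complex.I * ((r:ℂ) * sf A₂ (x k) (x k) - (A₂*X).trace) = 0 := by
      linear_combination hq
    obtain ⟨h1, h2⟩ := real_split _ _
      (by
        rw [map_sub, _root_.map_mul, map_natCast, herm_real hA₁, trace_real hA₁ hH])
      (by
        rw [map_sub, _root_.map_mul, map_natCast, herm_real hA₂, trace_real hA₂ hH])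
      key
    have e1 : star (x k) ⬝ᵥ A₁.mulVec (x k) = sf A₁ (x k) (x k) := rfl
    have e2 : star (x k) ⬝ᵥ A₂.mulVec (x k) = sf A₂ (x k) (x k) := rfl
    rw [e1, e2]
    constructor
    · linear_combination h1
    · linear_combination h2
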